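/- Let G be a bridgeless graph with d(G)=4 and let uv be an edge with l_G(uv) = g*(G) ≥ 6. Then S_{1,1} = S_{2,2} = ∅, and the sets {u,v}, S_{1,2}, S_{2,1}, S_{2,3}, S_{3,2}, S_{3,3}, S_{3,4}, S_{4,3}, S_{4,4} form a partition of V(G); equivalently, for every vertex w the pair (d(w,u), d(w,v)) belongs to {(0,1),(1,0),(1,2),(2,1),(2,3),(3,2),(3,3),(3,4),(4,3),(4,4)}. -/

import Mathlib

/-- A multigraph: vertices `V`, edges `E`, each edge has two distinct endpoints. -/
structure Multigraph (V : Type*) (E : Type*) where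
  ends : E → Sym2 V
  loopless : ∀ e, ¬ (ends e).IsDiag

namespace Multigraph

variable {V E : Type*}

/-- Adjacency in a multigraph: some edge joins `x` and `y`. -/
def Adjm (G : Multigraph V E) (x y : V) : Prop := ∃ e, G.ends e = s(x, y)

/-- The underlying simple graph of a multigraph. -/
def toSimple (G : Multigraph V E) : SimpleGraph V where
  Adj x y := x ≠ y ∧ G.Adjm x y
  symm := by
    constructor
    rintro x y ⟨hne, e, he⟩
    exact ⟨hne.symm, e, he.trans (Sym2.eq_swap)⟩
  loopless := by constructor; rintro x ⟨hne, -⟩; exact hne rfl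

/-- Distance between two vertices (length of a shortest path). -/
noncomputable def dist (G : Multigraph V E) (x y : V) : ℕ := G.toSimple.dist x y

/-- The diameter of a multigraph. -/
noncomputable def diam (G : Multigraph V E) : ℕ := sSup {n | ∃ x y, G.dist x y = n}

/-- The multigraph obtained by deleting the edge `e₀`. -/
def deleteEdge (G : Multigraph V E) (e₀ : E) : Multigraph V {e : E // e ≠ e₀} where
  ends e := G.ends e.1
  loopless e := G.loopless e.1

/-- A (connected) multigraph is bridgeless if deleting any single edge leaves it connected. -/
def Bridgeless (G : Multigraph V E) : Prop :=
  ∀ e : E, ((G.deleteEdge e).toSimple).Connected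

/-- Walks in a multigraph, recording the edges used. -/
inductive Walk (G : Multigraph V E) : V → V → Type _
  | nil {v : V} : Walk G v v
  | cons {x y z : V} (e : E) (he : G.ends e = s(x, y)) (p : Walk G y z) : Walk G x z

namespace Walk

variable {G : Multigraph V E}

/-- The length (number of edges) of a walk. -/
def length : ∀ {x y : V}, G.Walk x y → ℕ
  | _, _, .nil => 0
  | _, _, .cons _ _ p => p.length + 1

/-- The list of edges of a walk. -/
def edges : ∀ {x y : V}, G.Walk x y → List E
  | _, _, .nil => []
  | _, _, .cons e _ p => e :: p.edges

/-- The list of vertices of a walk. -/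
def support : ∀ {x y : V}, G.Walk x y → List V
  | x, _, .nil => [x]
  | x, _, .cons _ _ p => x :: p.support

/-- A closed walk is a cycle if its edges are distinct and its vertices
(other than the repeated base point) are distinct. -/
def IsCycle {v : V} (p : G.Walk v v) : Prop :=
  p.edges.Nodup ∧ p.support.tail.Nodup ∧ 0 < p.length

end Walk

/-- The edge girth of `e`: the length of a shortest cycle containing `e`. -/
noncomputable def edgeGirth (G : Multigraph V E) (e : E) : ℕ :=
  sInf {n | ∃ (v : V) (p : G.Walk v v), p.IsCycle ∧ e ∈ p.edges ∧ p.length = n}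

/-- The maximum edge girth `g*(G)`. -/
noncomputable def maxEdgeGirth (G : Multigraph V E) : ℕ :=
  sSup (Set.range fun e => G.edgeGirth e)

/-- An orientation of a multigraph: each edge is assigned a direction. -/
structure Orientation (G : Multigraph V E) where
  dir : E → V × V
  compat : ∀ e, s((dir e).1, (dir e).2) = G.ends e

/-- Arcs of an orientation. -/
def Orientation.DAdj {G : Multigraph V E} (o : G.Orientation) (x y : V) : Prop :=
  ∃ e, o.dir e = (x, y)

/-- Directed distance in an orientation (`⊤` if unreachable). -/
noncomputable def Orientation.ddist {G : Multigraph V E} (o : G.Orientation) (x y : V) : ℕ∞ :=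
  sInf {n : ℕ∞ | ∃ l : List V, List.Chain o.DAdj x l ∧
    (x :: l).getLast (List.cons_ne_nil x l) = y ∧ (l.length : ℕ∞) = n}

/-- An orientation is strong if every vertex is reachable from every vertex by a directed path. -/
def Orientation.IsStrong {G : Multigraph V E} (o : G.Orientation) : Prop :=
  ∀ x y : V, o.ddist x y ≠ ⊤

/-- The diameter of an orientation. -/
noncomputable def Orientation.odiam {G : Multigraph V E} (o : G.Orientation) : ℕ∞ :=
  ⨆ (x : V) (y : V), o.ddist x y

end Multigraph

namespace Multigraph

variable {V E : Type*}

/-- `S G u v i j` is the set of vertices at distance `i` from `u` and `j` from `v`. -/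
noncomputable def S (G : Multigraph V E) (u v : V) (i j : ℕ) : Set V :=
  {w | G.dist w u = i ∧ G.dist w v = j}

/-- The neighbourhood of a vertex. -/
def nbhd (G : Multigraph V E) (w : V) : Set V := {x | G.Adjm w x}

end Multigraph


section AuxStmt11

open Multigraph

variable {V E : Type*}

private lemma aux_ne_of_ends {G : Multigraph V E} {e f : E} {s t : Sym2 V}
    (he : G.ends e = s) (hf : G.ends f = t) (h : s ≠ t) : e ≠ f :=
  fun heq => h (by rw [← he, heq, hf])

private lemma aux_cycle3 (G : Multigraph V E) {u v w : V} (e f g : E)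
    (he : G.ends e = s(u, v)) (hf : G.ends f = s(v, w)) (hg : G.ends g = s(w, u))
    (huv : u ≠ v) (hvw : v ≠ w) (hwu : w ≠ u) :
    G.edgeGirth e ≤ 3 := by
  have hef : e ≠ f := aux_ne_of_ends he hf (by simp [Sym2.eq_iff]; tauto)
  have heg : e ≠ g := aux_ne_of_ends he hg (by simp [Sym2.eq_iff]; tauto)
  have hfg : f ≠ g := aux_ne_of_ends hf hg (by simp [Sym2.eq_iff]; tauto)
  refine Nat.sInf_le ⟨u, .cons e he (.cons f hf (.cons g hg .nil)), ⟨?_, ?_, ?_⟩, ?_, ?_⟩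
  · simp [Walk.edges, hef, heg, hfg]
  · simp [Walk.support, hvw, huv.symm, hwu]
  · simp [Walk.length]
  · simp [Walk.edges]
  · simp [Walk.length]

private lemma aux_cycle5 (G : Multigraph V E) {u v b w a : V} (e f1 f2 f3 f4 : E)
    (he : G.ends e = s(u, v)) (h1 : G.ends f1 = s(v, b)) (h2 : G.ends f2 = s(b, w))
    (h3 : G.ends f3 = s(w, a)) (h4 : G.ends f4 = s(a, u))
    (huv : u ≠ v) (hub : u ≠ b) (huw : u ≠ w) (hua : u ≠ a)
    (hvb : v ≠ b) (hvw : v ≠ w) (hva : v ≠ a)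
    (hbw : b ≠ w) (hba : b ≠ a) (hwa : w ≠ a) :
    G.edgeGirth e ≤ 5 := by
  have e1 : e ≠ f1 := aux_ne_of_ends he h1 (by simp [Sym2.eq_iff]; tauto)
  have e2 : e ≠ f2 := aux_ne_of_ends he h2 (by simp [Sym2.eq_iff]; tauto)
  have e3 : e ≠ f3 := aux_ne_of_ends he h3 (by simp [Sym2.eq_iff]; tauto)
  have e4 : e ≠ f4 := aux_ne_of_ends he h4 (by simp [Sym2.eq_iff]; tauto)
  have e12 : f1 ≠ f2 := aux_ne_of_ends h1 h2 (by simp [Sym2.eq_iff]; tauto)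
  have e13 : f1 ≠ f3 := aux_ne_of_ends h1 h3 (by simp [Sym2.eq_iff]; tauto)
  have e14 : f1 ≠ f4 := aux_ne_of_ends h1 h4 (by simp [Sym2.eq_iff]; tauto)
  have e23 : f2 ≠ f3 := aux_ne_of_ends h2 h3 (by simp [Sym2.eq_iff]; tauto)
  have e24 : f2 ≠ f4 := aux_ne_of_ends h2 h4 (by simp [Sym2.eq_iff]; tauto)
  have e34 : f3 ≠ f4 := aux_ne_of_ends h3 h4 (by simp [Sym2.eq_iff]; tauto)
  refine Nat.sInf_le ⟨u,
    .cons e he (.cons f1 h1 (.cons f2 h2 (.cons f3 h3 (.cons f4 h4 .nil)))),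
    ⟨?_, ?_, ?_⟩, ?_, ?_⟩
  · simp [Walk.edges, e1, e2, e3, e4, e12, e13, e14, e23, e24, e34]
  · simp [Walk.support, hvb, hvw, hva, huv.symm, hbw, hba, hub.symm, hwa, huw.symm,
      hua.symm]
  · simp [Walk.length]
  · simp [Walk.edges]
  · simp [Walk.length]

private lemma aux_mid {H : SimpleGraph V} {x y : V} (p : H.Walk x y) (hp : p.length = 2) :
    ∃ a, H.Adj x a ∧ H.Adj a y := by
  cases p with
  | nil => simp at hp
  | cons h q =>
    cases q with
    | nil => simp at hp
    | cons h' r =>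
      have hr : r.length = 0 := by
        simpa [SimpleGraph.Walk.length_cons] using hp
      have := SimpleGraph.Walk.eq_of_length_eq_zero hr
      exact ⟨_, h, this ▸ h'⟩

end AuxStmt11

set_option maxHeartbeats 1000000 in
/-- Let `G` be a bridgeless graph with `d(G) = 4` and let `uv` be an edge
with `l_G(uv) = g*(G) ≥ 6`. Then `S₁₁ = S₂₂ = ∅` and the sets `{u,v}`, `S₁₂`, `S₂₁`, `S₂₃`,
`S₃₂`, `S₃₃`, `S₃₄`, `S₄₃`, `S₄₄` partition `V(G)`; equivalently, for every vertex `w` the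
pair `(d(w,u), d(w,v))` belongs to
`{(0,1),(1,0),(1,2),(2,1),(2,3),(3,2),(3,3),(3,4),(4,3),(4,4)}`. -/
theorem stmt11 {V E : Type*} [Fintype V] [Fintype E] (G : Multigraph V E)
    (hconn : G.toSimple.Connected) (hbridgeless : G.Bridgeless) (hdiam : G.diam = 4)
    (u v : V) (e : E) (he : G.ends e = s(u, v))
    (hmax : G.edgeGirth e = G.maxEdgeGirth) (h6 : 6 ≤ G.maxEdgeGirth) :
    ∀ w : V, (G.dist w u, G.dist w v) ∈
      ({(0,1), (1,0), (1,2), (2,1), (2,3), (3,2), (3,3), (3,4), (4,3), (4,4)} :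
        Set (ℕ × ℕ)) := by
  intro w
  have hne_uv : u ≠ v := by
    have hl := G.loopless e
    rw [he] at hl
    simpa [Sym2.mk_isDiag_iff] using hl
  have hadj_uv : G.toSimple.Adj u v := ⟨hne_uv, e, he⟩
  have hduv : G.toSimple.dist u v = 1 := SimpleGraph.dist_eq_one_iff_adj.mpr hadj_uv
  have hdd : ∀ x y : V, G.dist x y = G.toSimple.dist x y := fun _ _ => rfl
  have h6e : 6 ≤ G.edgeGirth e := hmax ▸ h6
  -- distances are bounded by the diameter 4
  have hbound : ∀ x y : V, G.dist x y ≤ 4 := by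
    intro x y
    have hfin : {n | ∃ x y : V, G.dist x y = n}.Finite := by
      have hset : {n | ∃ x y : V, G.dist x y = n} =
          Set.range (fun p : V × V => G.dist p.1 p.2) := by
        ext n; simp [Set.mem_range, Prod.exists]
      rw [hset]; exact Set.finite_range _
    have hle : G.dist x y ≤ sSup {n | ∃ x y : V, G.dist x y = n} :=
      le_csSup hfin.bddAbove ⟨x, y, rfl⟩
    have hdef : G.diam = sSup {n | ∃ x y : V, G.dist x y = n} := rfl
    rw [← hdef, hdiam] at hle
    exact hle
  have hi4 : G.dist w u ≤ 4 := hbound w u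
  have hj4 : G.dist w v ≤ 4 := hbound w v
  -- triangle inequalities
  have htri1 : G.dist w u ≤ G.dist w v + 1 := by
    have := hconn.dist_triangle (u := w) (v := v) (w := u)
    rw [SimpleGraph.dist_comm (u := v), hduv] at this
    exact this
  have htri2 : G.dist w v ≤ G.dist w u + 1 := by
    have := hconn.dist_triangle (u := w) (v := u) (w := v)
    rw [hduv] at this
    exact this
  -- degenerate cases
  have h0i : G.dist w u = 0 → G.dist w v = 1 := by
    intro h
    have : w = u := (hconn.dist_eq_zero_iff).mp h
    rw [hdd, this, hduv]
  have h0j : G.dist w v = 0 → G.dist w u = 1 := by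
    intro h
    have : w = v := (hconn.dist_eq_zero_iff).mp h
    rw [hdd, this, SimpleGraph.dist_comm, hduv]
  -- S₁₁ is empty
  have hn11 : ¬ (G.dist w u = 1 ∧ G.dist w v = 1) := by
    rintro ⟨h1, h2⟩
    obtain ⟨hwu, e2, he2⟩ : G.toSimple.Adj w u := SimpleGraph.dist_eq_one_iff_adj.mp h1
    obtain ⟨hwv, e3, he3⟩ : G.toSimple.Adj w v := SimpleGraph.dist_eq_one_iff_adj.mp h2
    have hle3 := aux_cycle3 G e e3 e2 he (he3.trans Sym2.eq_swap) he2
      hne_uv (fun h => hwv h.symm) hwu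
    omega
  -- S₂₂ is empty
  have hn22 : ¬ (G.dist w u = 2 ∧ G.dist w v = 2) := by
    rintro ⟨h1, h2⟩
    have hwu : w ≠ u := fun h => by rw [hdd, h, SimpleGraph.dist_self] at h1; omega
    have hwv : w ≠ v := fun h => by rw [hdd, h, SimpleGraph.dist_self] at h2; omega
    obtain ⟨p, hp⟩ := hconn.exists_walk_length_eq_dist w u
    obtain ⟨q, hq⟩ := hconn.exists_walk_length_eq_dist w v
    rw [← hdd, h1] at hp
    rw [← hdd, h2] at hq
    obtain ⟨a, hwa, hau⟩ := aux_mid p hp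
    obtain ⟨b, hwb, hbv⟩ := aux_mid q hq
    have hav : a ≠ v := fun h => by
      have : G.dist w v = 1 := SimpleGraph.dist_eq_one_iff_adj.mpr (h ▸ hwa)
      omega
    have hbu : b ≠ u := fun h => by
      have : G.dist w u = 1 := SimpleGraph.dist_eq_one_iff_adj.mpr (h ▸ hwb)
      omega
    by_cases hab : a = b
    · subst hab
      obtain ⟨-, eav, heav⟩ := hbv
      obtain ⟨hau', eau, heau⟩ := hau
      have hle3 := aux_cycle3 G e eav eau he (heav.trans Sym2.eq_swap) heau
        hne_uv (fun h => hav h.symm) hau'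
      omega
    · obtain ⟨hwa', ewa, hewa⟩ := hwa
      obtain ⟨hau', eau, heau⟩ := hau
      obtain ⟨hwb', ewb, hewb⟩ := hwb
      obtain ⟨hbv', ebv, hebv⟩ := hbv
      -- cycle u - v - b - w - a - u
      have hle5 := aux_cycle5 G e ebv ewb ewa eau he
        (hebv.trans Sym2.eq_swap) (hewb.trans Sym2.eq_swap) hewa heau
        hne_uv (fun h => hbu h.symm) (fun h => hwu h.symm) (fun h => hau' h.symm)
        (fun h => hbv' h.symm) (fun h => hwv h.symm) (fun h => hav h.symm)
        (fun h => hwb' h.symm) (fun h => hab h.symm) hwa'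
      omega
  simp only [Set.mem_insert_iff, Set.mem_singleton_iff, Prod.mk.injEq]
  omega
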